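/- Let P and Q be probability distributions on a finite vocabulary V, and let t* ∈ V. If Q is required to satisfy Q(t) ≤ Q(t*) for all t ∈ V (i.e., t* is a maximizer of Q), then the minimizer of the KL divergence D_KL(Q ‖ P) subject to these constraints has the pooled form: there is a set C ⊆ V \ {t*} of size k, a constant r = (P(t*) · ∏_{t∈C} P(t))^{1/(k+1)} (the geometric mean of the pooled probabilities), and α = 1/Z with Z = (k+1)r + Σ_{t∉C∪{t*}} P(t), such that Q(t*) = αr, Q(t) = αr for t ∈ C, and Q(t) = αP(t) otherwise. -/

import Mathlib

lemma term_deriv (a b p : ℝ) (ha : 0 < a) (hp : 0 < p) :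
    HasDerivAt (fun x : ℝ => (a + b * x) * Real.log ((a + b * x) / p))
      (b * Real.log (a / p) + b) 0 := by
  have h1 : HasDerivAt (fun x : ℝ => a + b * x) b 0 := by
    simpa using ((hasDerivAt_id (0:ℝ)).const_mul b).const_add a
  have h2 : HasDerivAt (fun x : ℝ => (a + b * x) / p) (b / p) 0 := h1.div_const p
  have e0 : a + b * 0 = a := by ring
  have hg : HasDerivAt Real.log (a / p)⁻¹ ((fun x : ℝ => (a + b * x) / p) 0) := by
    simp only [e0]
    exact Real.hasDerivAt_log (by positivity)
  have h3 := hg.comp 0 h2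
  have h4 : HasDerivAt (fun x : ℝ => (a + b * x) * Real.log ((a + b * x) / p))
      (b * Real.log ((a + b * 0) / p) + (a + b * 0) * ((a / p)⁻¹ * (b / p))) 0 := h1.mul h3
  convert h4 using 1
  simp only [e0]
  field_simp

lemma sum_split {V : Type*} [Fintype V] [DecidableEq V] (B : Finset V) (s : V) (hs : s ∉ B)
    (h : V → ℝ) (hzero : ∀ t, t ∉ B → t ≠ s → h t = 0) :
    ∑ t, h t = (∑ t ∈ B, h t) + h s := by
  rw [← Finset.sum_sdiff (Finset.subset_univ B)]
  have : ∑ t ∈ Finset.univ \ B, h t = h s := by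
    apply Finset.sum_eq_single_of_mem s
    · simp [hs]
    · intro t ht hts
      exact hzero t (Finset.mem_sdiff.mp ht).2 hts
  rw [this]; ring

lemma pert_bound (c ε p : ℝ) (hc : 0 < c) (hp : 0 < p) (hε : 0 < ε) (hεc : ε ≤ c / 2) :
    (c - ε) * Real.log ((c - ε) / p) - c * Real.log (c / p) ≤ ε * Real.log (2 * p / c) := by
  have hu : (0:ℝ) < c - ε := by linarith
  have h1 : Real.log ((c - ε) / p) ≤ Real.log (c / p) := by
    apply Real.log_le_log (by positivity)
    gcongr
    linarith
  have h2 : Real.log (c / (2 * p)) ≤ Real.log ((c - ε) / p) := by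
    apply Real.log_le_log (by positivity)
    rw [div_le_div_iff₀ (by positivity) hp]
    nlinarith
  have h3 : Real.log (2 * p / c) = - Real.log (c / (2 * p)) := by
    rw [← Real.log_inv]
    congr 1
    field_simp
  calc (c - ε) * Real.log ((c - ε) / p) - c * Real.log (c / p)
      = -ε * Real.log ((c - ε) / p) + c * (Real.log ((c - ε) / p) - Real.log (c / p)) := by ring
    _ ≤ -ε * Real.log ((c - ε) / p) := by nlinarith
    _ ≤ -ε * Real.log (c / (2 * p)) := by nlinarith
    _ = ε * Real.log (2 * p / c) := by rw [h3]; ring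

set_option maxHeartbeats 1000000 in
/-- The KL projection onto {Q : Q(t) ≤ Q(t*) ∀ t} has the pooled-and-rescaled form. -/
theorem kl_minimizer_pooled_form {V : Type*} [Fintype V] [DecidableEq V]
    (P : V → ℝ) (hPpos : ∀ t, 0 < P t) (hPsum : ∑ t, P t = 1)
    (tstar : V) (Q : V → ℝ)
    (hQnn : ∀ t, 0 ≤ Q t) (hQsum : ∑ t, Q t = 1) (hQmax : ∀ t, Q t ≤ Q tstar)
    (hmin : ∀ Q' : V → ℝ, (∀ t, 0 ≤ Q' t) → (∑ t, Q' t = 1) → (∀ t, Q' t ≤ Q' tstar) →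
      (∑ t, Q t * Real.log (Q t / P t)) ≤ ∑ t, Q' t * Real.log (Q' t / P t)) :
    ∃ C : Finset V, tstar ∉ C ∧
      ∃ r α : ℝ,
        r = (P tstar * ∏ t ∈ C, P t) ^ ((1 : ℝ) / (C.card + 1)) ∧
        α = 1 / ((C.card + 1 : ℝ) * r + ∑ t ∈ Finset.univ \ insert tstar C, P t) ∧
        Q tstar = α * r ∧
        (∀ t ∈ C, Q t = α * r) ∧
        (∀ t, t ∉ insert tstar C → Q t = α * P t) := by
  classical
  obtain ⟨c, hc_def⟩ : ∃ c, c = Q tstar := ⟨_, rfl⟩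
  have hQts : Q tstar = c := hc_def.symm
  have hQmax' : ∀ t, Q t ≤ c := by rw [hc_def]; exact hQmax
  -- c > 0
  have hc : 0 < c := by
    have hcard : 0 < Fintype.card V := Fintype.card_pos_iff.mpr ⟨tstar⟩
    have hsum_le : (1:ℝ) ≤ (Fintype.card V : ℝ) * c := by
      rw [← hQsum]
      calc ∑ t, Q t ≤ ∑ _t : V, c := Finset.sum_le_sum (fun t _ => hQmax' t)
        _ = (Fintype.card V : ℝ) * c := by
            simp [Finset.sum_const, Finset.card_univ, nsmul_eq_mul]
    by_contra h
    push_neg at h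
    have : (Fintype.card V : ℝ) * c ≤ 0 :=
      mul_nonpos_of_nonneg_of_nonpos (by positivity) h
    linarith
  obtain ⟨C, hC_def⟩ : ∃ C : Finset V,
      C = Finset.univ.filter (fun t => t ≠ tstar ∧ Q t = c) := ⟨_, rfl⟩
  have htsC : tstar ∉ C := by simp [hC_def]
  obtain ⟨B, hB_def⟩ : ∃ B : Finset V, B = insert tstar C := ⟨_, rfl⟩
  have htsB : tstar ∈ B := by rw [hB_def]; exact Finset.mem_insert_self _ _
  have hBQ : ∀ t ∈ B, Q t = c := by
    intro t ht
    rw [hB_def] at ht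
    rcases Finset.mem_insert.mp ht with h | h
    · rw [h]; exact hQts
    · rw [hC_def] at h
      exact (Finset.mem_filter.mp h).2.2
  have hout : ∀ t, t ∉ B → Q t < c := by
    intro t ht
    have h1 : t ≠ tstar := fun e => ht (by rw [e]; exact htsB)
    have h2 : Q t ≠ c := fun e => ht (by
      rw [hB_def]
      exact Finset.mem_insert_of_mem (by
        rw [hC_def]
        exact Finset.mem_filter.mpr ⟨Finset.mem_univ _, h1, e⟩))
    exact lt_of_le_of_ne (hQmax' t) h2
  obtain ⟨k, hk_def⟩ : ∃ k, k = C.card := ⟨_, rfl⟩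
  have hBcard : B.card = k + 1 := by
    rw [hB_def, Finset.card_insert_of_notMem htsC, hk_def]
  obtain ⟨K, hK_def⟩ : ∃ K : ℝ, K = (k : ℝ) + 1 := ⟨_, rfl⟩
  have hKpos : (0:ℝ) < K := by
    have : (0:ℝ) ≤ (k:ℝ) := Nat.cast_nonneg k
    rw [hK_def]; linarith
  have hK1 : (1:ℝ) ≤ K := by
    have : (0:ℝ) ≤ (k:ℝ) := Nat.cast_nonneg k
    rw [hK_def]; linarith
  -- Step 1: positivity outside B
  have hQpos : ∀ s, s ∉ B → 0 < Q s := by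
    intro s hs
    rcases (hQnn s).lt_or_eq with h | h
    · exact h
    exfalso
    -- h : 0 = Q s ; derive a strictly better feasible point
    have hsO : s ∈ Finset.univ \ B := Finset.mem_sdiff.mpr ⟨Finset.mem_univ s, hs⟩
    obtain ⟨D, hD_def⟩ : ∃ D, D = ((Finset.univ \ B).image (fun t => c - Q t)).min'
        ⟨c - Q s, Finset.mem_image_of_mem _ hsO⟩ := ⟨_, rfl⟩
    have hDpos : 0 < D := by
      rw [hD_def]
      apply (Finset.lt_min'_iff _ _).mpr
      intro y hy
      obtain ⟨t, ht, rfl⟩ := Finset.mem_image.mp hy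
      have := hout t (Finset.mem_sdiff.mp ht).2
      linarith
    have hDle : ∀ t ∈ Finset.univ \ B, D ≤ c - Q t := fun t ht => by
      rw [hD_def]; exact Finset.min'_le _ _ (Finset.mem_image_of_mem _ ht)
    obtain ⟨M, hM_def⟩ : ∃ M, M = ∑ t ∈ B, Real.log (2 * P t / c) := ⟨_, rfl⟩
    obtain ⟨εb, hεb_def⟩ : ∃ e, e = (P s / K) * Real.exp (-(M + 1) / K) := ⟨_, rfl⟩
    have hεbpos : 0 < εb := by
      rw [hεb_def]; exact mul_pos (div_pos (hPpos s) hKpos) (Real.exp_pos _)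
    obtain ⟨ε, hε_def⟩ : ∃ e, e = min (min (c / (K + 1)) D) (εb / 2) := ⟨_, rfl⟩
    have hεpos : 0 < ε := by
      rw [hε_def]
      exact lt_min (lt_min (div_pos hc (by linarith)) hDpos) (by linarith)
    have hε1 : (K + 1) * ε ≤ c := by
      have h1 : ε ≤ c / (K + 1) := by
        rw [hε_def]; exact le_trans (min_le_left _ _) (min_le_left _ _)
      rw [mul_comm, ← le_div_iff₀ (by linarith : (0:ℝ) < K + 1)]
      exact h1
    have hεD : ε ≤ D := by
      rw [hε_def]; exact le_trans (min_le_left _ _) (min_le_right _ _)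
    have hεb2 : ε < εb := by
      rw [hε_def]; exact lt_of_le_of_lt (min_le_right _ _) (by linarith)
    have hεc2 : ε ≤ c / 2 := by nlinarith
    obtain ⟨Q', hQ'_def⟩ : ∃ Q' : V → ℝ,
        Q' = fun t => if t ∈ B then Q t - ε else if t = s then K * ε else Q t := ⟨_, rfl⟩
    have hQ's : Q' s = K * ε := by
      simp [hQ'_def, hs]
    have hQ'B : ∀ t ∈ B, Q' t = c - ε := by
      intro t ht
      simp only [hQ'_def, if_pos ht]
      rw [hBQ t ht]
    have hQ'o : ∀ t, t ∉ B → t ≠ s → Q' t = Q t := by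
      intro t ht hts
      simp [hQ'_def, ht, hts]
    have hQ'nn : ∀ t, 0 ≤ Q' t := by
      intro t
      by_cases htB : t ∈ B
      · rw [hQ'B t htB]; linarith
      · by_cases hts : t = s
        · rw [hts, hQ's]; exact mul_nonneg hKpos.le hεpos.le
        · rw [hQ'o t htB hts]; exact hQnn t
    have hQ'sum : ∑ t, Q' t = 1 := by
      have hzero : ∀ t, t ∉ B → t ≠ s → Q' t - Q t = 0 := by
        intro t ht hts; rw [hQ'o t ht hts]; ring
      have hsp' := sum_split B s hs (fun t => Q' t - Q t) hzero
      have hB' : ∑ t ∈ B, (Q' t - Q t) = -(K * ε) := by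
        have : ∀ t ∈ B, Q' t - Q t = -ε := by
          intro t ht; rw [hQ'B t ht, hBQ t ht]; ring
        rw [Finset.sum_congr rfl this, Finset.sum_const, hBcard, nsmul_eq_mul]
        push_cast [hK_def]
        ring
      have hs' : Q' s - Q s = K * ε := by rw [hQ's, ← h]; ring
      rw [hB', hs'] at hsp'
      have : ∑ t, (Q' t - Q t) = 0 := by rw [hsp']; ring
      rw [Finset.sum_sub_distrib] at this
      linarith [hQsum]
    have hQ'max : ∀ t, Q' t ≤ Q' tstar := by
      have hts' : Q' tstar = c - ε := hQ'B tstar htsB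
      intro t
      rw [hts']
      by_cases htB : t ∈ B
      · rw [hQ'B t htB]
      · by_cases hts : t = s
        · rw [hts, hQ's]; linarith
        · rw [hQ'o t htB hts]
          have := hDle t (Finset.mem_sdiff.mpr ⟨Finset.mem_univ t, htB⟩)
          linarith
    have hm := hmin Q' hQ'nn hQ'sum hQ'max
    -- strict decrease
    have hzero : ∀ t, t ∉ B → t ≠ s →
        Q' t * Real.log (Q' t / P t) - Q t * Real.log (Q t / P t) = 0 := by
      intro t ht hts; rw [hQ'o t ht hts]; ring
    have hsp' := sum_split B s hs
      (fun t => Q' t * Real.log (Q' t / P t) - Q t * Real.log (Q t / P t)) hzero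
    have hBbd : ∑ t ∈ B, (Q' t * Real.log (Q' t / P t) - Q t * Real.log (Q t / P t))
        ≤ ε * M := by
      rw [hM_def, Finset.mul_sum]
      apply Finset.sum_le_sum
      intro t ht
      rw [hQ'B t ht, hBQ t ht]
      exact pert_bound c ε (P t) hc (hPpos t) hεpos hεc2
    have hsbd : Q' s * Real.log (Q' s / P s) - Q s * Real.log (Q s / P s)
        < -(ε * (M + 1)) := by
      rw [hQ's, ← h]
      have h1 : K * ε / P s < Real.exp (-(M + 1) / K) := by
        rw [div_lt_iff₀ (hPpos s)]
        have : εb * K = P s * Real.exp (-(M + 1) / K) := by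
          rw [hεb_def]; field_simp
        nlinarith
      have h2 : Real.log (K * ε / P s) < -(M + 1) / K := by
        have := Real.log_lt_log (div_pos (mul_pos hKpos hεpos) (hPpos s)) h1
        rwa [Real.log_exp] at this
      have h3 : K * ε * Real.log (K * ε / P s) < K * ε * (-(M + 1) / K) :=
        (mul_lt_mul_iff_right₀ (mul_pos hKpos hεpos)).mpr h2
      have h4 : K * ε * (-(M + 1) / K) = -(ε * (M + 1)) := by
        field_simp
      simp only [zero_mul, sub_zero]
      linarith
    have hlt : ∑ t, (Q' t * Real.log (Q' t / P t) - Q t * Real.log (Q t / P t)) < 0 := by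
      rw [hsp']
      have : 0 < ε := hεpos
      nlinarith [hBbd, hsbd]
    rw [Finset.sum_sub_distrib] at hlt
    linarith
  have hQallpos : ∀ t, 0 < Q t := by
    intro t
    by_cases ht : t ∈ B
    · rw [hBQ t ht]; exact hc
    · exact hQpos t ht
  -- Step 2: stationarity
  have hstat : ∀ s, s ∉ B → K * Real.log (Q s / P s) = ∑ t ∈ B, Real.log (c / P t) := by
    intro s hs
    have hQs : 0 < Q s := hQpos s hs
    have hsO : s ∈ Finset.univ \ B := Finset.mem_sdiff.mpr ⟨Finset.mem_univ s, hs⟩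
    obtain ⟨D, hD_def⟩ : ∃ D, D = ((Finset.univ \ B).image (fun t => c - Q t)).min'
        ⟨c - Q s, Finset.mem_image_of_mem _ hsO⟩ := ⟨_, rfl⟩
    have hDpos : 0 < D := by
      rw [hD_def]
      apply (Finset.lt_min'_iff _ _).mpr
      intro y hy
      obtain ⟨t, ht, rfl⟩ := Finset.mem_image.mp hy
      have := hout t (Finset.mem_sdiff.mp ht).2
      linarith
    have hDle : ∀ t ∈ Finset.univ \ B, D ≤ c - Q t := fun t ht => by
      rw [hD_def]; exact Finset.min'_le _ _ (Finset.mem_image_of_mem _ ht)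
    have hDs : D ≤ c - Q s := hDle s hsO
    obtain ⟨η, hη_def⟩ : ∃ e, e = min D (Q s) / (K + 1) := ⟨_, rfl⟩
    have hηpos : 0 < η := by
      rw [hη_def]
      exact div_pos (lt_min hDpos hQs) (by linarith)
    have hηD : (K + 1) * η ≤ D := by
      have h1 : η ≤ min D (Q s) / (K + 1) := le_of_eq hη_def
      have h2 : min D (Q s) ≤ D := min_le_left _ _
      rw [hη_def]
      rw [mul_div_assoc']
      rw [div_le_iff₀ (by linarith : (0:ℝ) < K + 1)]
      nlinarith [min_le_left D (Q s)]
    have hηQs : (K + 1) * η ≤ Q s := by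
      rw [hη_def, mul_div_assoc', div_le_iff₀ (by linarith : (0:ℝ) < K + 1)]
      nlinarith [min_le_right D (Q s)]
    obtain ⟨b, hb_def⟩ : ∃ b : V → ℝ,
        b = fun t => if t ∈ B then 1 else if t = s then -K else 0 := ⟨_, rfl⟩
    have hbB : ∀ t ∈ B, b t = 1 := by
      intro t ht; simp [hb_def, ht]
    have hbs : b s = -K := by
      simp [hb_def, hs]
    have hbo : ∀ t, t ∉ B → t ≠ s → b t = 0 := by
      intro t ht hts; simp [hb_def, ht, hts]
    -- feasibility for |y| < η
    have hfeas : ∀ y : ℝ, |y| < η →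
        (∀ t, 0 ≤ Q t + b t * y) ∧ ((∑ t, (Q t + b t * y)) = 1) ∧
        (∀ t, Q t + b t * y ≤ Q tstar + b tstar * y) := by
      intro y hy
      rw [abs_lt] at hy
      have hηc : η ≤ c := by nlinarith [hηD, hDs, hQnn s, hK1, hηpos]
      refine ⟨?_, ?_, ?_⟩
      · intro t
        by_cases htB : t ∈ B
        · rw [hbB t htB, hBQ t htB]; nlinarith
        · by_cases hts : t = s
          · subst hts
            rw [hbs]
            nlinarith
          · rw [hbo t htB hts]
            have := hQnn t
            nlinarith
      · have hzero : ∀ t, t ∉ B → t ≠ s → b t * y = 0 := by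
          intro t ht hts; rw [hbo t ht hts]; ring
        have hsp' := sum_split B s hs (fun t => b t * y) hzero
        have hB' : ∑ t ∈ B, b t * y = K * y := by
          have : ∀ t ∈ B, b t * y = y := by
            intro t ht; rw [hbB t ht]; ring
          rw [Finset.sum_congr rfl this, Finset.sum_const, hBcard, nsmul_eq_mul]
          push_cast [hK_def]
          ring
        rw [hB'] at hsp'
        rw [Finset.sum_add_distrib, hQsum, hsp', hbs]
        ring
      · intro t
        rw [hbB tstar htsB, hQts]
        by_cases htB : t ∈ B
        · rw [hbB t htB, hBQ t htB]
        · by_cases hts : t = s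
          · subst hts
            rw [hbs]
            nlinarith
          · rw [hbo t htB hts]
            have := hDle t (Finset.mem_sdiff.mpr ⟨Finset.mem_univ t, htB⟩)
            nlinarith
    obtain ⟨f, hf_def⟩ : ∃ f : ℝ → ℝ,
        f = fun y => ∑ t, (Q t + b t * y) * Real.log ((Q t + b t * y) / P t) := ⟨_, rfl⟩
    have hderiv : HasDerivAt f (∑ t, (b t * Real.log (Q t / P t) + b t)) 0 := by
      rw [hf_def]
      exact HasDerivAt.fun_sum (fun t _ => term_deriv (Q t) (b t) (P t) (hQallpos t) (hPpos t))
    have hf0 : f 0 = ∑ t, Q t * Real.log (Q t / P t) := by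
      rw [hf_def]; simp only [mul_zero, add_zero]
    have hloc : IsLocalMin f 0 := by
      have hev : ∀ᶠ y in nhds (0:ℝ), f 0 ≤ f y := by
        rw [Metric.eventually_nhds_iff]
        refine ⟨η, hηpos, fun {y} hy => ?_⟩
        rw [Real.dist_eq, sub_zero] at hy
        obtain ⟨hf1, hf2, hf3⟩ := hfeas y hy
        rw [hf0, hf_def]
        exact hmin _ hf1 hf2 hf3
      exact hev
    have hz := hloc.hasDerivAt_eq_zero hderiv
    have hsb : ∑ t, b t = 0 := by
      have hsp' := sum_split B s hs b hbo
      have hB' : ∑ t ∈ B, b t = K := by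
        rw [Finset.sum_congr rfl hbB, Finset.sum_const, hBcard, nsmul_eq_mul]
        push_cast [hK_def]
        ring
      rw [hsp', hB', hbs]
      ring
    have hsbL : ∑ t, b t * Real.log (Q t / P t)
        = (∑ t ∈ B, Real.log (c / P t)) - K * Real.log (Q s / P s) := by
      have hzero : ∀ t, t ∉ B → t ≠ s → b t * Real.log (Q t / P t) = 0 := by
        intro t ht hts; rw [hbo t ht hts]; ring
      have hsp' := sum_split B s hs (fun t => b t * Real.log (Q t / P t)) hzero
      have hB' : ∑ t ∈ B, b t * Real.log (Q t / P t) = ∑ t ∈ B, Real.log (c / P t) := by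
        apply Finset.sum_congr rfl
        intro t ht
        rw [hbB t ht, hBQ t ht, one_mul]
      rw [hsp', hB', hbs]
      ring
    rw [Finset.sum_add_distrib, hsb, hsbL] at hz
    linarith
  -- Step 3: assemble
  obtain ⟨x, hx_def⟩ : ∃ x, x = P tstar * ∏ t ∈ C, P t := ⟨_, rfl⟩
  have hxpos : 0 < x := by
    rw [hx_def]
    exact mul_pos (hPpos tstar) (Finset.prod_pos (fun t _ => hPpos t))
  obtain ⟨r, hr_def⟩ : ∃ r, r = x ^ ((1:ℝ)/K) := ⟨_, rfl⟩
  have hrpos : 0 < r := by rw [hr_def]; exact Real.rpow_pos_of_pos hxpos _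
  have hlogr : Real.log r = (1/K) * Real.log x := by
    rw [hr_def, Real.log_rpow hxpos]
  -- sum over B of log(c/Pt) = K log c - log x
  have hsumB : ∑ t ∈ B, Real.log (c / P t) = K * Real.log c - Real.log x := by
    have h1 : ∀ t ∈ B, Real.log (c / P t) = Real.log c - Real.log (P t) := by
      intro t _; rw [Real.log_div hc.ne' (hPpos t).ne']
    rw [Finset.sum_congr rfl h1, Finset.sum_sub_distrib, Finset.sum_const, hBcard]
    have h2 : ∑ t ∈ B, Real.log (P t) = Real.log x := by
      rw [hB_def, Finset.sum_insert htsC, hx_def,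
        Real.log_mul (hPpos tstar).ne' (Finset.prod_pos (fun t _ => hPpos t)).ne',
        Real.log_prod (fun t _ => (hPpos t).ne')]
    rw [h2, nsmul_eq_mul]
    push_cast [hK_def]
    ring
  -- for s outside: Q s = (c/r) * P s
  have houtQ : ∀ s, s ∉ B → Q s = (c / r) * P s := by
    intro s hs
    have h1 := hstat s hs
    rw [hsumB] at h1
    have hlx : Real.log x = K * Real.log r := by
      rw [hlogr, one_div, ← mul_assoc, mul_inv_cancel₀ hKpos.ne', one_mul]
    rw [hlx] at h1
    have h2 : Real.log (Q s / P s) = Real.log (c / r) := by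
      rw [Real.log_div hc.ne' hrpos.ne']
      exact mul_left_cancel₀ hKpos.ne'
        (by rw [h1, mul_sub] : K * Real.log (Q s / P s) = K * (Real.log c - Real.log r))
    have h3 : Q s / P s = c / r := by
      have e1 := Real.exp_log (show 0 < Q s / P s from div_pos (hQpos s hs) (hPpos s))
      have e2 := Real.exp_log (show 0 < c / r from div_pos hc hrpos)
      rw [← e1, ← e2, h2]
    have h4 : Q s = Q s / P s * P s := (div_mul_cancel₀ (Q s) (hPpos s).ne').symm
    rw [h4, h3]
  -- the sum identity
  obtain ⟨S, hS_def⟩ : ∃ S, S = ∑ t ∈ Finset.univ \ B, P t := ⟨_, rfl⟩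
  have hSnn : 0 ≤ S := by
    rw [hS_def]; exact Finset.sum_nonneg (fun t _ => (hPpos t).le)
  have hZpos : 0 < K * r + S := add_pos_of_pos_of_nonneg (mul_pos hKpos hrpos) hSnn
  have hkey : (c / r) * (K * r + S) = 1 := by
    have h1 : ∑ t ∈ B, Q t = K * c := by
      rw [Finset.sum_congr rfl hBQ, Finset.sum_const, hBcard, nsmul_eq_mul]
      push_cast [hK_def]
      ring
    have h2 : ∑ t ∈ Finset.univ \ B, Q t = (c / r) * S := by
      rw [hS_def, Finset.mul_sum]
      apply Finset.sum_congr rfl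
      intro t ht
      exact houtQ t (Finset.mem_sdiff.mp ht).2
    have h3 : (∑ t ∈ Finset.univ \ B, Q t) + ∑ t ∈ B, Q t = 1 := by
      rw [Finset.sum_sdiff (Finset.subset_univ B)]; exact hQsum
    rw [h1, h2] at h3
    have h4 : (c / r) * (K * r) = K * c := by field_simp
    calc (c / r) * (K * r + S) = (c / r) * (K * r) + (c / r) * S := by ring
      _ = K * c + (c / r) * S := by rw [h4]
      _ = 1 := by linarith
  have hα : c / r = 1 / (K * r + S) := by
    rw [eq_div_iff hZpos.ne']
    exact hkey
  refine ⟨C, htsC, r, 1 / (K * r + S), ?_, ?_, ?_, ?_, ?_⟩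
  · rw [hr_def, hx_def, hK_def, hk_def]
  · rw [hS_def, hB_def, hK_def, hk_def]
  · rw [hQts, ← hα]; field_simp
  · intro t ht
    rw [← hα]
    have : Q t = c := hBQ t (by rw [hB_def]; exact Finset.mem_insert_of_mem ht)
    rw [this]; field_simp
  · intro t ht
    rw [← hα]
    exact houtQ t (by rw [hB_def]; exact ht)
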